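/- Let A be a ring with involution and g₁, g_q, l_a, l_b ∈ A units with g_q = l_a⁻¹ g₁ l_a and g₁ = l_b⁻¹ g_q l_b. Let E be the chain complex E₂ = A² → E₁ = A⁴ → E₀ = A² with ∂₂ having rows (−1, g₁−1, 0, −l_b⁻¹) and (−l_a⁻¹, 0, g_q−1, −1) and ∂₁ having rows (g₁−1, 0), (1, l_b⁻¹), (l_a⁻¹, 1), (0, g_q−1), and let E' be the chain complex E'₂ = A → E'₁ = A² → E'₀ = A with ∂₂ = (l_a l_b − 1, 1 − g₁) and ∂₁ the column (g₁ − 1, l_a l_b − 1) (all matrices acting by right multiplication on row vectors). Then the maps η₂ = column (−l_b⁻¹l_a⁻¹, 0): A² → A, η₁ = the 4×2 matrix with rows (1, 0), (0, l_b⁻¹l_a⁻¹), (0, 0), (−l_a⁻¹, 0): A⁴ → A², η₀ = column (1, −l_a⁻¹): A² → A form a chain map η: E → E', and η is a chain homotopy equivalence. -/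

import Mathlib

open scoped Matrix

namespace stmt15

variable (A : Type*) [Ring A]

/-- `∂₂ : E₂ → E₁` of the chain complex `E` of the torus split into two annuli
(matrices act by right multiplication on row vectors). -/
def d2E (g1 gq la lb : Aˣ) : Matrix (Fin 2) (Fin 4) A :=
  !![-1, (g1 : A) - 1, 0, -((lb⁻¹ : Aˣ) : A);
     -((la⁻¹ : Aˣ) : A), 0, (gq : A) - 1, -1]

/-- `∂₁ : E₁ → E₀`. -/
def d1E (g1 gq la lb : Aˣ) : Matrix (Fin 4) (Fin 2) A :=
  !![(g1 : A) - 1, 0;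
     1, ((lb⁻¹ : Aˣ) : A);
     ((la⁻¹ : Aˣ) : A), 1;
     0, (gq : A) - 1]

/-- `∂₂ : E'₂ → E'₁` of the standard torus complex `E'`. -/
def d2E' (g1 la lb : Aˣ) : Matrix (Fin 1) (Fin 2) A :=
  !![(la : A) * (lb : A) - 1, 1 - (g1 : A)]

/-- `∂₁ : E'₁ → E'₀`. -/
def d1E' (g1 la lb : Aˣ) : Matrix (Fin 2) (Fin 1) A :=
  !![(g1 : A) - 1; (la : A) * (lb : A) - 1]

/-- `η₂ : E₂ → E'₂`. -/
def eta2 (la lb : Aˣ) : Matrix (Fin 2) (Fin 1) A :=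
  !![-(((lb⁻¹ : Aˣ) : A) * ((la⁻¹ : Aˣ) : A)); 0]

/-- `η₁ : E₁ → E'₁`. -/
def eta1 (la lb : Aˣ) : Matrix (Fin 4) (Fin 2) A :=
  !![1, 0;
     0, ((lb⁻¹ : Aˣ) : A) * ((la⁻¹ : Aˣ) : A);
     0, 0;
     -((la⁻¹ : Aˣ) : A), 0]

/-- `η₀ : E₀ → E'₀`. -/
def eta0 (la : Aˣ) : Matrix (Fin 2) (Fin 1) A := !![1; -((la⁻¹ : Aˣ) : A)]

end stmt15

set_option maxHeartbeats 2000000 in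
/-- Let `A` be a ring and `g₁, g_q, l_a, l_b` units with
`g_q = l_a⁻¹g₁l_a` and `g₁ = l_b⁻¹g_ql_b` (e.g. `A = ℤ[π₁(X)]` for a knot
exterior `X`).  Let `E` be the chain complex `A² → A⁴ → A²` of the torus split
into two annuli and `E'` the standard torus complex `A → A² → A`, with the
differentials above (matrices acting by right multiplication on row vectors,
so composing "first `M` then `N`" has matrix `M * N`).  Then `η = (η₂, η₁, η₀)`
is a chain map `E → E'`, and `η` is a chain homotopy equivalence: there are a
chain map `ξ : E' → E` and chain homotopies `s` (on `E`) and `t` (on `E'`)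
from the two composites to the identities. -/
theorem stmt_15 (A : Type*) [Ring A] (g1 gq la lb : Aˣ)
    (ha : (gq : A) = ((la⁻¹ : Aˣ) : A) * (g1 : A) * (la : A))
    (hb : (g1 : A) = ((lb⁻¹ : Aˣ) : A) * (gq : A) * (lb : A)) :
    -- η is a chain map
    stmt15.d2E A g1 gq la lb * stmt15.eta1 A la lb
      = stmt15.eta2 A la lb * stmt15.d2E' A g1 la lb ∧
    stmt15.d1E A g1 gq la lb * stmt15.eta0 A la
      = stmt15.eta1 A la lb * stmt15.d1E' A g1 la lb ∧
    -- η is a chain homotopy equivalence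
    ∃ (xi2 : Matrix (Fin 1) (Fin 2) A) (xi1 : Matrix (Fin 2) (Fin 4) A)
      (xi0 : Matrix (Fin 1) (Fin 2) A)
      (s0 : Matrix (Fin 2) (Fin 4) A) (s1 : Matrix (Fin 4) (Fin 2) A)
      (t0 : Matrix (Fin 1) (Fin 2) A) (t1 : Matrix (Fin 2) (Fin 1) A),
      -- ξ is a chain map E' → E
      stmt15.d2E' A g1 la lb * xi1 = xi2 * stmt15.d2E A g1 gq la lb ∧
      stmt15.d1E' A g1 la lb * xi0 = xi1 * stmt15.d1E A g1 gq la lb ∧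
      -- ξ ∘ η ≃ 1 : E → E  (composite "first η then ξ" has matrix η * ξ)
      stmt15.eta0 A la * xi0 - 1 = s0 * stmt15.d1E A g1 gq la lb ∧
      stmt15.eta1 A la lb * xi1 - 1
        = stmt15.d1E A g1 gq la lb * s0 + s1 * stmt15.d2E A g1 gq la lb ∧
      stmt15.eta2 A la lb * xi2 - 1 = stmt15.d2E A g1 gq la lb * s1 ∧
      -- η ∘ ξ ≃ 1 : E' → E'
      xi0 * stmt15.eta0 A la - 1 = t0 * stmt15.d1E' A g1 la lb ∧
      xi1 * stmt15.eta1 A la lb - 1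
        = stmt15.d1E' A g1 la lb * t0 + t1 * stmt15.d2E' A g1 la lb ∧
      xi2 * stmt15.eta2 A la lb - 1 = stmt15.d2E' A g1 la lb * t1 := by
  have hai : ((la⁻¹ : Aˣ) : A) * (la : A) = 1 := by
    exact Units.inv_mul la
  have hai' : (la : A) * ((la⁻¹ : Aˣ) : A) = 1 := by
    exact Units.mul_inv la
  have hbi : ((lb⁻¹ : Aˣ) : A) * (lb : A) = 1 := by
    exact Units.inv_mul lb
  have hbi' : (lb : A) * ((lb⁻¹ : Aˣ) : A) = 1 := by
    exact Units.mul_inv lb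
  -- a * gq = g1 * a
  have h1 : (la : A) * (gq : A) = (g1 : A) * (la : A) := by
    rw [ha, ← mul_assoc, ← mul_assoc, hai', one_mul]
  -- b * g1 = gq * b
  have h2 : (lb : A) * (g1 : A) = (gq : A) * (lb : A) := by
    rw [hb, ← mul_assoc, ← mul_assoc, hbi', one_mul]
  -- a⁻¹ * g1 = gq * a⁻¹
  have h3 : ((la⁻¹ : Aˣ) : A) * (g1 : A) = (gq : A) * ((la⁻¹ : Aˣ) : A) := by
    have := congrArg (fun x => ((la⁻¹ : Aˣ) : A) * x * ((la⁻¹ : Aˣ) : A)) h1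
    simpa [mul_assoc, hai, hai'] using this.symm
  -- b⁻¹ * gq = g1 * b⁻¹
  have h4 : ((lb⁻¹ : Aˣ) : A) * (gq : A) = (g1 : A) * ((lb⁻¹ : Aˣ) : A) := by
    have := congrArg (fun x => ((lb⁻¹ : Aˣ) : A) * x * ((lb⁻¹ : Aˣ) : A)) h2
    simpa [mul_assoc, hbi, hbi'] using this.symm
  -- b⁻¹ a⁻¹ g1 = g1 b⁻¹ a⁻¹
  have h5 : ((lb⁻¹ : Aˣ) : A) * (((la⁻¹ : Aˣ) : A) * (g1 : A))
      = (g1 : A) * (((lb⁻¹ : Aˣ) : A) * ((la⁻¹ : Aˣ) : A)) := by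
    rw [h3, ← mul_assoc, h4, mul_assoc]
  have h5' : ((lb⁻¹ : Aˣ) : A) * ((la⁻¹ : Aˣ) : A) * (g1 : A)
      = (g1 : A) * ((lb⁻¹ : Aˣ) : A) * ((la⁻¹ : Aˣ) : A) := by
    rw [mul_assoc ((lb⁻¹ : Aˣ) : A), h5, ← mul_assoc]
  refine ⟨?_, ?_,
    !![-((la : A) * (lb : A)), (la : A)],
    !![1, 0, 0, 0; 0, (la : A) * (lb : A), -(la : A), 0],
    !![1, 0],
    !![0, 0, 0, 0; 0, 0, -1, 0],
    !![0, 0; 0, 0; 0, 0; 0, 1],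
    !![0, 0], !![0; 0], ?_, ?_, ?_, ?_, ?_, ?_, ?_, ?_⟩ <;>
  · ext i j
    fin_cases i <;> fin_cases j <;>
      simp [stmt15.d2E, stmt15.d1E, stmt15.d2E', stmt15.d1E', stmt15.eta2,
        stmt15.eta1, stmt15.eta0, Matrix.mul_apply, Fin.sum_univ_succ,
        Matrix.one_apply, Matrix.vecHead, Matrix.vecTail, mul_sub, sub_mul,
        mul_assoc, hai, hai', hbi, hbi'] <;>
      (try noncomm_ring) <;>
      (try simp [← mul_assoc, h1, h2, h3, h4, h5']) <;>
      (try abel)
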